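/- arXiv:2510.22416 — 2 statements merged into one kernel-verified Lean document; each statement's English description precedes it below -/
import Mathlib

section
/- Deterministic core of Theorem 2.3: Let λ ∈ ℝ, σ₀ ≠ 0, and let K : (0,∞) → ℝ be continuous and locally square-integrable. Let R : (0,∞) → ℝ be continuous and locally integrable, satisfying the resolvent equation R(t) + ∫₀ᵗ (−σ₀² K(t−s)²) R(s) ds = −σ₀² K(t)² for all t > 0, and suppose that the function R_λ(s) := e^{2λs} R(s) satisfies ∫_{T−t}^{T} R_λ(s) ds = (∫₀ᵗ R_λ(s) ds)(1 − ∫₀^{T−t} R_λ(s) ds) for all 0 < t < T. Then there exists c ∈ ℝ such that K(t) = c e^{−λt} for all t > 0. -/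
open MeasureTheory Set Filter intervalIntegral

lemma aux_intInt {u : ℝ → ℝ} (hu : ∀ T > 0, MeasureTheory.IntegrableOn u (Set.Ioc 0 T))
    {a b : ℝ} (ha : 0 ≤ a) (hab : a ≤ b) : IntervalIntegrable u volume a b := by
  rw [intervalIntegrable_iff_integrableOn_Ioc_of_le hab]
  rcases lt_or_ge 0 b with hb | hb
  · exact (hu b hb).mono_set (Ioc_subset_Ioc ha le_rfl)
  · rw [Ioc_eq_empty (by intro h; exact absurd (lt_of_le_of_lt ha h) (not_lt.2 hb))]
    exact integrableOn_empty

lemma aux_cont_primitive {u : ℝ → ℝ} (hu : ∀ T > 0, MeasureTheory.IntegrableOn u (Set.Ioc 0 T)) :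
    ContinuousOn (fun x => ∫ s in (0:ℝ)..x, u s) (Set.Ici 0) := by
  intro t ht
  have h1 : ContinuousWithinAt (fun x => ∫ s in (0:ℝ)..x, u s) (Set.Icc 0 (t+1)) t := by
    apply continuousWithinAt_primitive (measure_singleton t)
    rw [min_self]
    exact aux_intInt hu le_rfl (le_max_of_le_right (by simp at ht ⊢; linarith))
  apply h1.mono_of_mem_nhdsWithin
  have : Set.Icc (0:ℝ) (t+1) = Set.Ici 0 ∩ Set.Iic (t+1) := (Set.Ici_inter_Iic).symm
  rw [this]
  exact Filter.inter_mem self_mem_nhdsWithin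
    (mem_nhdsWithin_of_mem_nhds (Iic_mem_nhds (by linarith [mem_Ici.mp ht])))

lemma aux_ftc {u : ℝ → ℝ} (hu : ∀ T > 0, MeasureTheory.IntegrableOn u (Set.Ioc 0 T))
    (hc : ContinuousOn u (Set.Ioi 0)) {t : ℝ} (ht : 0 < t) :
    HasDerivAt (fun x => ∫ s in (0:ℝ)..x, u s) (u t) t :=
  intervalIntegral.integral_hasDerivAt_right (aux_intInt hu le_rfl ht.le)
    (hc.stronglyMeasurableAtFilter isOpen_Ioi t ht)
    (hc.continuousAt (isOpen_Ioi.mem_nhds ht))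

lemma aux_const (ψ : ℝ → ℝ) (hc : ContinuousOn ψ (Set.Ici 0))
    (hd : ∀ x > 0, HasDerivAt ψ 0 x) : ∀ t ≥ 0, ψ t = ψ 0 := by
  intro t ht
  rcases eq_or_lt_of_le ht with h | h
  · rw [← h]
  have key : ∀ ε ∈ Set.Ioc (0:ℝ) t, ψ t = ψ ε := by
    intro ε hε
    have := constant_of_has_deriv_right_zero (f := ψ) (a := ε) (b := t)
      (hc.mono (Set.Icc_subset_Ici_self.trans (Set.Ici_subset_Ici.2 hε.1.le)))
      (fun x hx => ((hd x (lt_of_lt_of_le hε.1 hx.1)).hasDerivWithinAt))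
    exact this t (Set.right_mem_Icc.2 hε.2)
  have h1 : Filter.Tendsto ψ (nhdsWithin 0 (Set.Ioi 0)) (nhds (ψ 0)) :=
    ((hc 0 Set.self_mem_Ici).mono Set.Ioi_subset_Ici_self).tendsto
  have h2 : Filter.Tendsto ψ (nhdsWithin 0 (Set.Ioi 0)) (nhds (ψ t)) := by
    apply Filter.Tendsto.congr' _ tendsto_const_nhds
    filter_upwards [Filter.inter_mem self_mem_nhdsWithin
      (mem_nhdsWithin_of_mem_nhds (Iic_mem_nhds h))] with x hx
    exact key x ⟨hx.1, hx.2⟩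
  exact tendsto_nhds_unique h2 h1

/-- Deterministic core of Theorem 2.3 (driftless geometric Volterra process):
if `R` is the resolvent of the second kind of `−σ₀² K²` and `e^{2λ·} R`
satisfies the quadratic integral identity forced by the Markov property,
then the kernel `K` is exponential. -/
theorem stmt_8 (lam σ0 : ℝ) (hσ0 : σ0 ≠ 0) (K R : ℝ → ℝ)
    (hKc : ContinuousOn K (Set.Ioi 0))
    (hKL2 : ∀ T > 0, MeasureTheory.IntegrableOn (fun s => (K s) ^ 2) (Set.Ioc 0 T))
    (hRc : ContinuousOn R (Set.Ioi 0))
    (hRint : ∀ T > 0, MeasureTheory.IntegrableOn R (Set.Ioc 0 T))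
    (hres : ∀ t > 0,
      R t + (∫ s in (0:ℝ)..t, (-(σ0 ^ 2) * (K (t - s)) ^ 2) * R s)
        = -(σ0 ^ 2) * (K t) ^ 2)
    (hfun : ∀ t T : ℝ, 0 < t → t < T →
      (∫ s in (T - t)..T, Real.exp (2 * lam * s) * R s)
        = (∫ s in (0:ℝ)..t, Real.exp (2 * lam * s) * R s) *
            (1 - ∫ s in (0:ℝ)..(T - t), Real.exp (2 * lam * s) * R s)) :
    ∃ c : ℝ, ∀ t > 0, K t = c * Real.exp (-lam * t) := by
  set rho : ℝ → ℝ := fun s => Real.exp (2 * lam * s) * R s with hrhodef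
  have hrhoint : ∀ T > 0, MeasureTheory.IntegrableOn rho (Set.Ioc 0 T) := by
    intro T hT
    rw [← intervalIntegrable_iff_integrableOn_Ioc_of_le hT.le]
    have h1 : IntervalIntegrable R volume 0 T := by
      rw [intervalIntegrable_iff_integrableOn_Ioc_of_le hT.le]; exact hRint T hT
    exact h1.continuousOn_mul
      ((Continuous.continuousOn (by fun_prop) : ContinuousOn (fun s : ℝ => Real.exp (2 * lam * s)) _))
  have hrhoc : ContinuousOn rho (Set.Ioi 0) :=
    (Continuous.continuousOn (by fun_prop)).mul hRc
  set F : ℝ → ℝ := fun x => ∫ s in (0:ℝ)..x, rho s with hFdef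
  set G : ℝ → ℝ := fun x => 1 - F x with hGdef
  have hF0 : F 0 = 0 := intervalIntegral.integral_same
  have hFc : ContinuousOn F (Set.Ici 0) := aux_cont_primitive hrhoint
  have hGc : ContinuousOn G (Set.Ici 0) := continuousOn_const.sub hFc
  have hG0 : G 0 = 1 := by rw [hGdef]; simp [hF0]
  -- multiplicativity of G
  have hGmul : ∀ a b : ℝ, 0 ≤ a → 0 ≤ b → G (a + b) = G a * G b := by
    intro a b ha hb
    rcases eq_or_lt_of_le ha with ha' | ha'
    · rw [← ha', zero_add, hG0, one_mul]
    rcases eq_or_lt_of_le hb with hb' | hb'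
    · rw [← hb', add_zero, hG0, mul_one]
    have h := hfun b (a + b) hb' (by linarith)
    rw [show a + b - b = a by ring] at h
    have hadd : F a + (∫ s in a..(a + b), rho s) = F (a + b) :=
      intervalIntegral.integral_add_adjacent_intervals
        (aux_intInt hrhoint le_rfl ha'.le) (aux_intInt hrhoint ha'.le (by linarith))
    have hFab : F (a + b) = F a + F b * (1 - F a) := by
      rw [← hadd, h]
    rw [hGdef]
    show 1 - F (a + b) = (1 - F a) * (1 - F b)
    rw [hFab]; ring
  -- positivity of G
  have hGnonneg : ∀ t ≥ 0, 0 ≤ G t := by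
    intro t ht
    have h := hGmul (t / 2) (t / 2) (by linarith) (by linarith)
    rw [show t / 2 + t / 2 = t by ring] at h
    rw [h]; exact mul_self_nonneg _
  have hGpos : ∀ t ≥ 0, 0 < G t := by
    intro t ht
    rcases (hGnonneg t ht).lt_or_eq with hlt | heq
    · exact hlt
    exfalso
    have hzero : ∀ n : ℕ, G (t / 2 ^ n) = 0 := by
      intro n; induction n with
      | zero => simpa using heq.symm
      | succ n ih =>
        have hmul := hGmul (t / 2 ^ (n + 1)) (t / 2 ^ (n + 1)) (by positivity) (by positivity)
        rw [show t / 2 ^ (n + 1) + t / 2 ^ (n + 1) = t / 2 ^ n by rw [pow_succ]; ring] at hmul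
        have h0 : G (t / 2 ^ (n + 1)) * G (t / 2 ^ (n + 1)) = 0 := by rw [← hmul, ih]
        exact mul_self_eq_zero.mp h0
    have hseq : Filter.Tendsto (fun n : ℕ => t / 2 ^ n) Filter.atTop (nhds 0) := by
      have h2 : Filter.Tendsto (fun n : ℕ => t * (1 / 2 : ℝ) ^ n) Filter.atTop (nhds (t * 0)) :=
        (tendsto_pow_atTop_nhds_zero_of_lt_one (by norm_num) (by norm_num)).const_mul t
      simpa [one_div, inv_pow, div_eq_mul_inv] using h2
    have hG0lim : Filter.Tendsto (fun n : ℕ => G (t / 2 ^ n)) Filter.atTop (nhds (G 0)) := by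
      apply Filter.Tendsto.comp (hGc 0 Set.self_mem_Ici)
      rw [tendsto_nhdsWithin_iff]
      exact ⟨hseq, Filter.Eventually.of_forall fun n => Set.mem_Ici.mpr (by positivity)⟩
    have hzero' : Filter.Tendsto (fun _ : ℕ => (0 : ℝ)) Filter.atTop (nhds (G 0)) :=
      hG0lim.congr hzero
    have h01 : (0 : ℝ) = G 0 := tendsto_nhds_unique tendsto_const_nhds hzero'
    rw [hG0] at h01
    exact zero_ne_one h01
  -- derivatives
  have hFd : ∀ t > 0, HasDerivAt F (rho t) t := fun t ht => aux_ftc hrhoint hrhoc ht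
  have hGd : ∀ t > 0, HasDerivAt G (-rho t) t := fun t ht => (hFd t ht).const_sub 1
  -- rho (a+b) = G a * rho b
  have hrhoG : ∀ a b : ℝ, 0 < a → 0 < b → rho (a + b) = G a * rho b := by
    intro a b ha hb
    have h1 : HasDerivAt (fun x => G (a + x)) (-rho (a + b)) b := by
      have h := (hGd (a + b) (by linarith)).comp b ((hasDerivAt_id b).const_add a)
      rw [mul_one] at h; exact h
    have h2 : HasDerivAt (fun x => G a * G x) (G a * (-rho b)) b := (hGd b hb).const_mul (G a)
    have h3 : HasDerivAt (fun x => G (a + x)) (G a * (-rho b)) b := by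
      apply h2.congr_of_eventuallyEq
      filter_upwards [isOpen_Ioi.mem_nhds hb] with x hx
      exact hGmul a x ha.le (le_of_lt hx)
    have h4 := h1.unique h3
    linear_combination -h4
  -- the constant mu
  set mu : ℝ := rho 1 / G 1 with hmudef
  have hG1 : 0 < G 1 := hGpos 1 zero_le_one
  have hratio : ∀ t > 0, rho t * G 1 = rho 1 * G t := by
    intro t ht
    rcases lt_trichotomy t 1 with h | h | h
    · have h1 : rho 1 = G (1 - t) * rho t := by
        have := hrhoG (1 - t) t (by linarith) ht
        rw [show 1 - t + t = 1 by ring] at this; exact this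
      have h2 : G 1 = G (1 - t) * G t := by
        have := hGmul (1 - t) t (by linarith) ht.le
        rw [show 1 - t + t = 1 by ring] at this; exact this
      rw [h1, h2]; ring
    · rw [h]
    · have h1 : rho t = G (t - 1) * rho 1 := by
        have := hrhoG (t - 1) 1 (by linarith) one_pos
        rw [show t - 1 + 1 = t by ring] at this; exact this
      have h2 : G t = G (t - 1) * G 1 := by
        have := hGmul (t - 1) 1 (by linarith) zero_le_one
        rw [show t - 1 + 1 = t by ring] at this; exact this
      rw [h1, h2]; ring
  have hrhomu : ∀ t > 0, rho t = mu * G t := by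
    intro t ht
    rw [hmudef, div_mul_eq_mul_div, eq_div_iff hG1.ne']
    linear_combination hratio t ht
  -- G is an exponential
  have hGexp : ∀ t ≥ 0, G t = Real.exp (-mu * t) := by
    have hpsid : ∀ x > 0, HasDerivAt (fun y => Real.exp (mu * y) * G y) 0 x := by
      intro x hx
      have hlin : HasDerivAt (fun y : ℝ => mu * y) mu x := by
        simpa using (hasDerivAt_id x).const_mul mu
      have hd := hlin.exp.mul (hGd x hx)
      refine hd.congr_deriv ?_
      rw [hrhomu x hx]; ring
    have hpsic : ContinuousOn (fun y => Real.exp (mu * y) * G y) (Set.Ici 0) :=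
      (Continuous.continuousOn (by fun_prop)).mul hGc
    have hconst := aux_const _ hpsic hpsid
    intro t ht
    have h1 := hconst t ht
    simp only [mul_zero, Real.exp_zero, one_mul, hG0] at h1
    have key : Real.exp (mu * t) * Real.exp (-mu * t) = 1 := by
      rw [← Real.exp_add, show mu * t + -mu * t = 0 by ring, Real.exp_zero]
    rw [neg_mul, Real.exp_neg]
    exact eq_inv_of_mul_eq_one_left (by linear_combination h1)
  have hrhoexp : ∀ t > 0, rho t = mu * Real.exp (-mu * t) := fun t ht => by
    rw [hrhomu t ht, hGexp t ht.le]
  -- the kernel part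
  set ff : ℝ → ℝ := fun s => -(σ0 ^ 2) * K s ^ 2 with hffdef
  set gg : ℝ → ℝ := fun s => Real.exp (2 * lam * s) * ff s with hggdef
  have hggV : ∀ t > 0, gg t = rho t + ∫ s in (0:ℝ)..t, gg (t - s) * rho s := by
    intro t ht
    have h := hres t ht
    have h2 : Real.exp (2 * lam * t) * (R t + ∫ s in (0:ℝ)..t, (-(σ0 ^ 2) * (K (t - s)) ^ 2) * R s)
        = Real.exp (2 * lam * t) * (-(σ0 ^ 2) * (K t) ^ 2) := by rw [h]
    rw [mul_add, ← intervalIntegral.integral_const_mul] at h2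
    have h3 : (∫ s in (0:ℝ)..t, Real.exp (2 * lam * t) * ((-(σ0 ^ 2) * (K (t - s)) ^ 2) * R s))
        = ∫ s in (0:ℝ)..t, gg (t - s) * rho s := by
      apply intervalIntegral.integral_congr
      intro s hs
      simp only [hggdef, hffdef, hrhodef]
      have hexp : Real.exp (2 * lam * (t - s)) * Real.exp (2 * lam * s)
          = Real.exp (2 * lam * t) := by
        rw [← Real.exp_add]; congr 1; ring
      linear_combination (σ0 ^ 2 * K (t - s) ^ 2 * R s) * hexp
    rw [h3] at h2
    exact h2.symm
  set hh : ℝ → ℝ := fun s => Real.exp (mu * s) * gg s with hhhdef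
  set HH : ℝ → ℝ := fun x => ∫ s in (0:ℝ)..x, hh s with hHHdef
  have hhhint : ∀ T > 0, MeasureTheory.IntegrableOn hh (Set.Ioc 0 T) := by
    intro T hT
    have h1 : IntervalIntegrable (fun s => K s ^ 2) volume 0 T := by
      rw [intervalIntegrable_iff_integrableOn_Ioc_of_le hT.le]; exact hKL2 T hT
    have h2 := h1.continuousOn_mul
      ((Continuous.continuousOn (by fun_prop) :
        ContinuousOn (fun s : ℝ => Real.exp (mu * s) * Real.exp (2 * lam * s) * (-(σ0 ^ 2))) _))
    rw [intervalIntegrable_iff_integrableOn_Ioc_of_le hT.le] at h2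
    apply h2.congr_fun _ measurableSet_Ioc
    intro x hx
    simp only [hhhdef, hggdef, hffdef]
    ring
  have hhhc : ContinuousOn hh (Set.Ioi 0) := by
    simp only [hhhdef, hggdef, hffdef]
    exact (Continuous.continuousOn (by fun_prop)).mul
      ((Continuous.continuousOn (by fun_prop)).mul (continuousOn_const.mul (hKc.pow 2)))
  have hHH0 : HH 0 = 0 := intervalIntegral.integral_same
  have hHHc : ContinuousOn HH (Set.Ici 0) := aux_cont_primitive hhhint
  have hHHd : ∀ t > 0, HasDerivAt HH (hh t) t := fun t ht => aux_ftc hhhint hhhc ht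
  have hflip : ∀ t > 0, (∫ s in (0:ℝ)..t, gg (t - s) * rho s)
      = mu * Real.exp (-mu * t) * HH t := by
    intro t ht
    have h1 : (∫ s in (0:ℝ)..t, gg (t - s) * rho s)
        = ∫ s in (0:ℝ)..t, gg s * rho (t - s) := by
      have h := intervalIntegral.integral_comp_sub_left (a := (0:ℝ)) (b := t)
        (fun x => gg x * rho (t - x)) t
      simp only [sub_sub_cancel, sub_zero, sub_self] at h
      exact h
    rw [h1]
    have h2 : (∫ s in (0:ℝ)..t, gg s * rho (t - s))
        = ∫ s in (0:ℝ)..t, (mu * Real.exp (-mu * t)) * hh s := by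
      rw [intervalIntegral.integral_of_le ht.le, intervalIntegral.integral_of_le ht.le]
      apply MeasureTheory.setIntegral_congr_ae measurableSet_Ioc
      have hae : ∀ᵐ s : ℝ, s ≠ t := by
        rw [MeasureTheory.ae_iff]
        have hset : {a : ℝ | ¬ a ≠ t} = {t} := by ext a; simp
        rw [hset]; exact measure_singleton t
      filter_upwards [hae] with s hst hs
      have hts : 0 < t - s := sub_pos.mpr (lt_of_le_of_ne hs.2 hst)
      rw [hrhoexp (t - s) hts]
      simp only [hhhdef]
      have hexp : Real.exp (-mu * (t - s)) = Real.exp (-mu * t) * Real.exp (mu * s) := by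
        rw [← Real.exp_add]; congr 1; ring
      rw [hexp]; ring
    rw [h2, intervalIntegral.integral_const_mul]
  have hhh_eq : ∀ t > 0, hh t = mu + mu * HH t := by
    intro t ht
    have h1 := hggV t ht
    rw [hflip t ht, hrhoexp t ht] at h1
    have key : Real.exp (mu * t) * Real.exp (-mu * t) = 1 := by
      rw [← Real.exp_add, show mu * t + -mu * t = 0 by ring, Real.exp_zero]
    simp only [hhhdef]
    rw [h1]
    linear_combination (mu + mu * HH t) * key
  have hthconst : ∀ t ≥ 0, Real.exp (-mu * t) * (1 + HH t) = 1 := by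
    have hd : ∀ x > 0, HasDerivAt (fun y => Real.exp (-mu * y) * (1 + HH y)) 0 x := by
      intro x hx
      have hlin : HasDerivAt (fun y : ℝ => -mu * y) (-mu) x := by
        simpa using (hasDerivAt_id x).const_mul (-mu)
      have hd2 := hlin.exp.mul ((hHHd x hx).const_add 1)
      refine hd2.congr_deriv ?_
      rw [hhh_eq x hx]; ring
    have hc : ContinuousOn (fun y => Real.exp (-mu * y) * (1 + HH y)) (Set.Ici 0) :=
      (Continuous.continuousOn (by fun_prop)).mul (continuousOn_const.add hHHc)
    intro t ht
    have h := aux_const _ hc hd t ht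
    rw [h]
    simp [hHH0]
  have hggconst : ∀ t > 0, gg t = mu := by
    intro t ht
    have h1 := hthconst t ht.le
    have key : Real.exp (mu * t) * Real.exp (-mu * t) = 1 := by
      rw [← Real.exp_add, show mu * t + -mu * t = 0 by ring, Real.exp_zero]
    have h2 : 1 + HH t = Real.exp (mu * t) := by
      linear_combination Real.exp (mu * t) * h1 - (1 + HH t) * key
    have h3 := hhh_eq t ht
    simp only [hhhdef] at h3
    have h4 : Real.exp (mu * t) * gg t = Real.exp (mu * t) * mu := by
      rw [h3]; linear_combination mu * h2
    exact mul_left_cancel₀ (Real.exp_ne_zero _) h4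
  -- conclude
  have hσ2 : (0:ℝ) < σ0 ^ 2 := by positivity
  have hKsq : ∀ t > 0, K t ^ 2 = (-mu / σ0 ^ 2) * Real.exp (-lam * t) ^ 2 := by
    intro t ht
    have h1 := hggconst t ht
    simp only [hggdef, hffdef] at h1
    have key : Real.exp (2 * lam * t) * Real.exp (-lam * t) ^ 2 = 1 := by
      rw [sq, ← Real.exp_add, ← Real.exp_add,
        show 2 * lam * t + (-lam * t + -lam * t) = 0 by ring, Real.exp_zero]
    rw [div_mul_eq_mul_div, eq_div_iff hσ2.ne']
    linear_combination (-(Real.exp (-lam * t) ^ 2)) * h1 - (σ0 ^ 2 * K t ^ 2) * key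
  have hc0sq : 0 ≤ -mu / σ0 ^ 2 := by
    by_contra hneg
    push_neg at hneg
    have h1 := hKsq 1 one_pos
    nlinarith [sq_nonneg (K 1), pow_pos (Real.exp_pos (-lam * 1)) 2]
  set c0 : ℝ := Real.sqrt (-mu / σ0 ^ 2) with hc0def
  have hc0 : 0 ≤ c0 := Real.sqrt_nonneg _
  have hKsq' : ∀ t > 0, K t ^ 2 = (c0 * Real.exp (-lam * t)) ^ 2 := by
    intro t ht
    rw [mul_pow, hc0def, Real.sq_sqrt hc0sq]
    exact hKsq t ht
  rcases hc0.eq_or_lt with hc0eq | hc0pos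
  · refine ⟨0, fun t ht => ?_⟩
    have h1 := hKsq' t ht
    rw [← hc0eq, zero_mul] at h1
    simp only [ne_eq, OfNat.ofNat_ne_zero, not_false_eq_true, zero_pow, pow_eq_zero_iff] at h1
    rw [h1, zero_mul]
  · have hKne : ∀ t > 0, K t ≠ 0 := by
      intro t ht h0
      have h1 := hKsq' t ht
      rw [h0] at h1
      have hpos : 0 < (c0 * Real.exp (-lam * t)) ^ 2 := by positivity
      simp only [ne_eq, OfNat.ofNat_ne_zero, not_false_eq_true, zero_pow] at h1
      exact absurd h1.symm hpos.ne'
    have hsign : ∀ a b : ℝ, 0 < a → 0 < b → K a < 0 → 0 < K b → False := by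
      intro a b ha hb hKa hKb
      have hsub : Set.uIcc a b ⊆ Set.Ioi 0 := by
        intro x hx
        rw [Set.mem_uIcc] at hx
        rcases hx with ⟨h1, _⟩ | ⟨h1, _⟩
        · exact lt_of_lt_of_le ha h1
        · exact lt_of_lt_of_le hb h1
      have him := intermediate_value_uIcc (hKc.mono hsub)
      have h0m : (0:ℝ) ∈ Set.uIcc (K a) (K b) := Set.mem_uIcc.mpr (Or.inl ⟨hKa.le, hKb.le⟩)
      obtain ⟨x, hx, hKx⟩ := him h0m
      exact hKne x (hsub hx) hKx
    rcases lt_or_gt_of_ne (hKne 1 one_pos) with hK1 | hK1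
    · refine ⟨-c0, fun t ht => ?_⟩
      have hKt : K t < 0 := by
        rcases lt_or_gt_of_ne (hKne t ht) with h | h
        · exact h
        · exact (hsign 1 t one_pos ht hK1 h).elim
      have h1 := hKsq' t ht
      have he : 0 < c0 * Real.exp (-lam * t) := by positivity
      have h2 : (K t - c0 * Real.exp (-lam * t)) * (K t + c0 * Real.exp (-lam * t)) = 0 := by
        linear_combination h1
      rcases mul_eq_zero.mp h2 with h3 | h3
      · linarith
      · linear_combination h3
    · refine ⟨c0, fun t ht => ?_⟩
      have hKt : 0 < K t := by
        rcases lt_or_gt_of_ne (hKne t ht) with h | h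
        · exact (hsign t 1 ht one_pos h hK1).elim
        · exact h
      have h1 := hKsq' t ht
      have he : 0 < c0 * Real.exp (-lam * t) := by positivity
      have h2 : (K t - c0 * Real.exp (-lam * t)) * (K t + c0 * Real.exp (-lam * t)) = 0 := by
        linear_combination h1
      rcases mul_eq_zero.mp h2 with h3 | h3
      · linear_combination h3
      · linarith
end

section
/- Fix H > 0 and define c_H(a,b) := ∫₀^{min(a,b)} (a−u)^{H−1/2} (b−u)^{H−1/2} du for a, b > 0. Then, as τ ↘ 0, c_H(τ², τ³)² / (c_H(τ², τ²) · c_H(τ³, τ³)) ∼ (2H/(H+1/2))² · τ; in particular c_H(τ², τ³)² = o(c_H(τ², τ²) · c_H(τ³, τ³)). -/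
open MeasureTheory Set Filter intervalIntegral Asymptotics

/-- Covariance function of the Riemann–Liouville process
`Y_t = ∫₀ᵗ (t−s)^{H−1/2} dB_s`. -/
noncomputable def cH (H a b : ℝ) : ℝ :=
  ∫ u in (0:ℝ)..(min a b), (a - u) ^ (H - 1/2) * (b - u) ^ (H - 1/2)

lemma intInt_sub_rpow (p c : ℝ) (hp : -1 < p) :
    IntervalIntegrable (fun u => (c - u) ^ p) volume 0 c := by
  simpa using ((intervalIntegrable_rpow' (a := 0) (b := c) hp).comp_sub_left c).symm

lemma integral_sub_rpow (p c : ℝ) (hp : -1 < p) (hc : 0 ≤ c) :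
    ∫ u in (0:ℝ)..c, (c - u) ^ p = c ^ (p + 1) / (p + 1) := by
  rw [intervalIntegral.integral_comp_sub_left (fun x => x ^ p) c]
  simp only [sub_self, sub_zero]
  rw [integral_rpow (Or.inl hp), Real.zero_rpow (by linarith : p + 1 ≠ 0)]
  ring

lemma pow_rpow' (τ : ℝ) (hτ : 0 ≤ τ) (n : ℕ) (r : ℝ) :
    ((τ ^ n : ℝ)) ^ r = τ ^ ((n : ℝ) * r) := by
  rw [← Real.rpow_natCast τ n, ← Real.rpow_mul hτ]

lemma cH_diag (H : ℝ) (hH : 0 < H) (a : ℝ) (ha : 0 ≤ a) :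
    cH H a a = a ^ (2 * H) / (2 * H) := by
  unfold cH
  rw [min_self]
  have h1 : EqOn (fun u => (a - u) ^ (H - 1/2) * (a - u) ^ (H - 1/2))
      (fun u => (a - u) ^ (2 * H - 1)) (Set.uIcc 0 a) := by
    intro u hu
    rw [Set.uIcc_of_le ha] at hu
    have h0 : 0 ≤ a - u := by linarith [hu.2]
    simp only
    rw [show 2 * H - 1 = (H - 1/2) * 2 by ring, Real.rpow_mul h0,
      show (2:ℝ) = ((2:ℕ):ℝ) by norm_num, Real.rpow_natCast]
    ring
  rw [intervalIntegral.integral_congr h1,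
    integral_sub_rpow (2 * H - 1) a (by linarith) ha]
  norm_num

lemma rpow_min_max {x c d p : ℝ} (hc : 0 < c) (hcx : c ≤ x) (hxd : x ≤ d) :
    min (c ^ p) (d ^ p) ≤ x ^ p ∧ x ^ p ≤ max (c ^ p) (d ^ p) := by
  rcases le_or_gt 0 p with hp | hp
  · exact ⟨(min_le_left _ _).trans (Real.rpow_le_rpow hc.le hcx hp),
      (Real.rpow_le_rpow (hc.trans_le hcx).le hxd hp).trans (le_max_right _ _)⟩
  · exact ⟨(min_le_right _ _).trans
      (Real.rpow_le_rpow_of_nonpos (hc.trans_le hcx) hxd hp.le),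
      (Real.rpow_le_rpow_of_nonpos hc hcx hp.le).trans (le_max_left _ _)⟩

/-- As `τ ↘ 0`, `c_H(τ²,τ³)²/(c_H(τ²,τ²) c_H(τ³,τ³)) ∼ (2H/(H+1/2))² τ`;
in particular `c_H(τ²,τ³)² = o(c_H(τ²,τ²) c_H(τ³,τ³))`. -/
theorem stmt_11 (H : ℝ) (hH : 0 < H) :
    Filter.Tendsto (fun τ : ℝ =>
        ((cH H (τ ^ 2) (τ ^ 3)) ^ 2 /
          (cH H (τ ^ 2) (τ ^ 2) * cH H (τ ^ 3) (τ ^ 3))) /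
          ((2 * H / (H + 1/2)) ^ 2 * τ))
      (nhdsWithin 0 (Set.Ioi 0)) (nhds 1) ∧
    (fun τ : ℝ => (cH H (τ ^ 2) (τ ^ 3)) ^ 2)
      =o[nhdsWithin 0 (Set.Ioi 0)]
        (fun τ : ℝ => cH H (τ ^ 2) (τ ^ 2) * cH H (τ ^ 3) (τ ^ 3)) := by
  have hq : (-1:ℝ) < H - 1/2 := by linarith
  have hq1 : (0:ℝ) < H - 1/2 + 1 := by linarith
  set q : ℝ := H - 1/2 with hqdef
  set l := nhdsWithin (0:ℝ) (Set.Ioi 0) with hl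
  set f : ℝ → ℝ := fun τ =>
    cH H (τ ^ 2) (τ ^ 3) / (τ ^ (2 * q) * (τ ^ (3 * (q + 1)) / (q + 1))) with hf
  have hev : ∀ᶠ τ in l, τ ∈ Set.Ioo (0:ℝ) 1 :=
    Filter.eventually_of_mem (Ioo_mem_nhdsGT_of_mem (by norm_num)) fun x hx => hx
  -- bounds for f
  have hbound : ∀ τ : ℝ, τ ∈ Set.Ioo (0:ℝ) 1 →
      min 1 ((1 - τ) ^ q) ≤ f τ ∧ f τ ≤ max 1 ((1 - τ) ^ q) := by
    intro τ hτ
    obtain ⟨ht0, ht1⟩ := hτ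
    have ha : (0:ℝ) < τ ^ 2 := by positivity
    have hb : (0:ℝ) < τ ^ 3 := by positivity
    have hba : τ ^ 3 < τ ^ 2 := by nlinarith
    have hP : (0:ℝ) < τ ^ (2 * q) := Real.rpow_pos_of_pos ht0 _
    have hD : (0:ℝ) < τ ^ (3 * (q + 1)) / (q + 1) :=
      div_pos (Real.rpow_pos_of_pos ht0 _) hq1
    -- cH of (τ^2, τ^3)
    have hmin : min (τ ^ 2) (τ ^ 3) = τ ^ 3 := min_eq_right hba.le
    have hIb : IntervalIntegrable (fun u => (τ ^ 3 - u) ^ q) volume 0 (τ ^ 3) :=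
      intInt_sub_rpow q (τ ^ 3) hq
    have hcont : ContinuousOn (fun u : ℝ => (τ ^ 2 - u) ^ q) (Set.uIcc 0 (τ ^ 3)) := by
      apply ContinuousOn.rpow_const
      · exact continuousOn_const.sub continuousOn_id
      · intro x hx
        rw [Set.uIcc_of_le hb.le] at hx
        left
        have : x ≤ τ ^ 3 := hx.2
        nlinarith
    have hImid : IntervalIntegrable
        (fun u => (τ ^ 2 - u) ^ q * (τ ^ 3 - u) ^ q) volume 0 (τ ^ 3) :=
      hIb.continuousOn_mul hcont
    set L : ℝ := min ((τ ^ 2 - τ ^ 3) ^ q) ((τ ^ 2) ^ q) with hL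
    set U : ℝ := max ((τ ^ 2 - τ ^ 3) ^ q) ((τ ^ 2) ^ q) with hU
    have hptwise : ∀ u ∈ Set.Icc (0:ℝ) (τ ^ 3),
        L ≤ (τ ^ 2 - u) ^ q ∧ (τ ^ 2 - u) ^ q ≤ U := by
      intro u hu
      exact rpow_min_max (by linarith : (0:ℝ) < τ ^ 2 - τ ^ 3)
        (by linarith [hu.2]) (by linarith [hu.1])
    have hIntval : ∫ u in (0:ℝ)..(τ ^ 3), (τ ^ 3 - u) ^ q
        = (τ ^ 3) ^ (q + 1) / (q + 1) := integral_sub_rpow q (τ ^ 3) hq hb.le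
    have hlow : L * ((τ ^ 3) ^ (q + 1) / (q + 1)) ≤ cH H (τ ^ 2) (τ ^ 3) := by
      rw [cH, hmin, ← hIntval, ← intervalIntegral.integral_const_mul]
      apply intervalIntegral.integral_mono_on hb.le (hIb.const_mul L) hImid
      intro u hu
      exact mul_le_mul_of_nonneg_right (hptwise u hu).1 (Real.rpow_nonneg
        (by linarith [hu.2]) _)
    have hhigh : cH H (τ ^ 2) (τ ^ 3) ≤ U * ((τ ^ 3) ^ (q + 1) / (q + 1)) := by
      rw [cH, hmin, ← hIntval, ← intervalIntegral.integral_const_mul]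
      apply intervalIntegral.integral_mono_on hb.le hImid (hIb.const_mul U)
      intro u hu
      exact mul_le_mul_of_nonneg_right (hptwise u hu).2 (Real.rpow_nonneg
        (by linarith [hu.2]) _)
    -- identify powers
    have hPa : (τ ^ 2 : ℝ) ^ q = τ ^ (2 * q) := pow_rpow' τ ht0.le 2 q
    have hPab : (τ ^ 2 - τ ^ 3 : ℝ) ^ q = (1 - τ) ^ q * τ ^ (2 * q) := by
      rw [show τ ^ 2 - τ ^ 3 = (1 - τ) * τ ^ 2 by ring,
        Real.mul_rpow (by linarith) (by positivity), hPa]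
    have hDb : (τ ^ 3 : ℝ) ^ (q + 1) / (q + 1) = τ ^ (3 * (q + 1)) / (q + 1) := by
      rw [pow_rpow' τ ht0.le 3 (q + 1)]; norm_num
    have hLmin : L = min 1 ((1 - τ) ^ q) * τ ^ (2 * q) := by
      rw [hL, hPa, hPab]
      rcases le_total ((1 - τ) ^ q) 1 with h | h
      · rw [min_eq_right h, min_eq_left (mul_le_of_le_one_left hP.le h)]
      · rw [min_eq_left h, one_mul, min_eq_right (le_mul_of_one_le_left hP.le h)]
    have hUmax : U = max 1 ((1 - τ) ^ q) * τ ^ (2 * q) := by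
      rw [hU, hPa, hPab]
      rcases le_total ((1 - τ) ^ q) 1 with h | h
      · rw [max_eq_right (mul_le_of_le_one_left hP.le h), max_eq_left h, one_mul]
      · rw [max_eq_left (le_mul_of_one_le_left hP.le h), max_eq_right h]
    constructor
    · rw [hf]
      rw [le_div_iff₀ (by positivity)]
      calc min 1 ((1 - τ) ^ q) * (τ ^ (2 * q) * (τ ^ (3 * (q + 1)) / (q + 1)))
          = (min 1 ((1 - τ) ^ q) * τ ^ (2 * q)) * (τ ^ (3 * (q + 1)) / (q + 1)) := by ring
        _ = L * ((τ ^ 3) ^ (q + 1) / (q + 1)) := by rw [hLmin, hDb]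
        _ ≤ cH H (τ ^ 2) (τ ^ 3) := hlow
    · rw [hf]
      rw [div_le_iff₀ (by positivity)]
      calc cH H (τ ^ 2) (τ ^ 3) ≤ U * ((τ ^ 3) ^ (q + 1) / (q + 1)) := hhigh
        _ = (max 1 ((1 - τ) ^ q) * τ ^ (2 * q)) * (τ ^ (3 * (q + 1)) / (q + 1)) := by
            rw [hUmax, hDb]
        _ = max 1 ((1 - τ) ^ q) * (τ ^ (2 * q) * (τ ^ (3 * (q + 1)) / (q + 1))) := by ring
  -- limit of bound functions
  have h1q : Tendsto (fun τ : ℝ => (1 - τ) ^ q) l (nhds 1) := by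
    have hc : ContinuousAt (fun τ : ℝ => (1 - τ) ^ q) 0 := by
      apply ContinuousAt.rpow_const
      · exact continuousAt_const.sub continuousAt_id
      · left; norm_num
    have := hc.tendsto.mono_left (nhdsWithin_le_nhds (s := Set.Ioi (0:ℝ)))
    simpa using this
  have hlo : Tendsto (fun τ : ℝ => min 1 ((1 - τ) ^ q)) l (nhds 1) := by
    simpa using (tendsto_const_nhds (x := (1:ℝ)) (f := l)).min h1q
  have hhi : Tendsto (fun τ : ℝ => max 1 ((1 - τ) ^ q)) l (nhds 1) := by
    simpa using (tendsto_const_nhds (x := (1:ℝ)) (f := l)).max h1q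
  have hF : Tendsto f l (nhds 1) :=
    tendsto_of_tendsto_of_tendsto_of_le_of_le' hlo hhi
      (hev.mono fun τ hτ => (hbound τ hτ).1)
      (hev.mono fun τ hτ => (hbound τ hτ).2)
  -- eventual equality of ratio with f^2
  have hratio_eq : ∀ᶠ τ in l,
      ((cH H (τ ^ 2) (τ ^ 3)) ^ 2 /
        (cH H (τ ^ 2) (τ ^ 2) * cH H (τ ^ 3) (τ ^ 3))) /
        ((2 * H / (H + 1/2)) ^ 2 * τ) = (f τ) ^ 2 := by
    filter_upwards [hev] with τ hτ
    obtain ⟨ht0, ht1⟩ := hτ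
    have hd2 : cH H (τ ^ 2) (τ ^ 2) = τ ^ (4 * H) / (2 * H) := by
      rw [cH_diag H hH _ (by positivity), pow_rpow' τ ht0.le 2 (2 * H)]
      norm_num; ring_nf
    have hd3 : cH H (τ ^ 3) (τ ^ 3) = τ ^ (6 * H) / (2 * H) := by
      rw [cH_diag H hH _ (by positivity), pow_rpow' τ ht0.le 3 (2 * H)]
      norm_num; ring_nf
    rw [hd2, hd3, hf]
    show _ = (cH H (τ ^ 2) (τ ^ 3) / (τ ^ (2 * q) * (τ ^ (3 * (q + 1)) / (q + 1)))) ^ 2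
    have e1 : τ ^ ((4:ℝ) * H) * τ ^ ((6:ℝ) * H) * τ = τ ^ ((10:ℝ) * H + 1) := by
      nth_rewrite 3 [← Real.rpow_one τ]
      rw [← Real.rpow_add ht0, ← Real.rpow_add ht0]
      norm_num
      ring_nf
    have e2 : (τ ^ (2 * q) * (τ ^ (3 * (q + 1)) / (q + 1))) ^ 2
        = τ ^ ((10:ℝ) * H + 1) / (q + 1) ^ 2 := by
      rw [mul_pow, div_pow, ← Real.rpow_natCast (τ ^ (2 * q)) 2,
        ← Real.rpow_natCast (τ ^ (3 * (q + 1))) 2,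
        ← Real.rpow_mul ht0.le, ← Real.rpow_mul ht0.le, ← mul_div_assoc,
        ← Real.rpow_add ht0]
      rw [show 2 * q * ((2:ℕ):ℝ) + 3 * (q + 1) * ((2:ℕ):ℝ) = (10:ℝ) * H + 1 by
        push_cast; rw [hqdef]; ring]
    conv_rhs => rw [div_pow, e2]
    rw [div_div]
    congr 1
    have hq1' : q + 1 = H + 1/2 := by rw [hqdef]; ring
    rw [hq1']
    field_simp
    rw [mul_comm H 6, mul_comm H 10]
    exact e1
  have hRatio : Tendsto (fun τ : ℝ =>
      ((cH H (τ ^ 2) (τ ^ 3)) ^ 2 /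
        (cH H (τ ^ 2) (τ ^ 2) * cH H (τ ^ 3) (τ ^ 3))) /
        ((2 * H / (H + 1/2)) ^ 2 * τ)) l (nhds 1) := by
    apply Tendsto.congr' (hratio_eq.mono fun τ h => h.symm)
    simpa using hF.pow 2
  refine ⟨hRatio, ?_⟩
  rw [Asymptotics.isLittleO_iff_tendsto']
  · have hk : Tendsto (fun τ : ℝ => (2 * H / (H + 1/2)) ^ 2 * τ) l (nhds 0) := by
      have : Tendsto (fun τ : ℝ => τ) l (nhds 0) :=
        tendsto_id.mono_left nhdsWithin_le_nhds
      simpa using tendsto_const_nhds.mul this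
    have hmul := hRatio.mul hk
    rw [one_mul] at hmul
    apply Tendsto.congr' _ hmul
    filter_upwards [hev] with τ hτ
    have hkne : ((2 * H / (H + 1/2)) ^ 2 * τ : ℝ) ≠ 0 := by
      have := hτ.1
      positivity
    exact div_mul_cancel₀ _ hkne
  · filter_upwards [hev] with τ hτ h0
    exfalso
    obtain ⟨ht0, ht1⟩ := hτ
    have hd2 : 0 < cH H (τ ^ 2) (τ ^ 2) := by
      rw [cH_diag H hH _ (by positivity)]
      positivity
    have hd3 : 0 < cH H (τ ^ 3) (τ ^ 3) := by
      rw [cH_diag H hH _ (by positivity)]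
      positivity
    exact (mul_pos hd2 hd3).ne' h0
end
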